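/- arXiv:2411.19863 — 2 statements merged into one kernel-verified Lean document; each statement's English description precedes it below -/
import Mathlib

section
/- Let C be a small category in which every morphism factors as a strong epimorphism followed by a monomorphism, let n ∈ ℕ, and let X be a presheaf on C with dim X ≤ n. Then every minimal object (x, D) of the category of elements C/X satisfies 𝔥D ≤ n; consequently every sequence of n+1 composable morphisms in the full subcategory of C/X determined by the minimal objects contains an isomorphism (i.e. IBD_n holds in D X). -/
open CategoryTheory Opposite

universe w v u

namespace PaperEtendue

/-- An element `w` of a Heyting algebra is *widespread* if the lattice of elements
above `w` is complemented. -/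
def Widespread {H : Type u} [HeytingAlgebra H] (w : H) : Prop :=
  ∀ v : H, w ≤ v → ∃ v' : H, w ≤ v' ∧ v ⊔ v' = ⊤ ∧ v ⊓ v' = w

/-- An object is *minimal* if every morphism with that domain is a monomorphism. -/
def Minimal {C : Type u} [Category.{v} C] (c : C) : Prop :=
  ∀ ⦃d : C⦄ (f : c ⟶ d), Mono f

/-- An object is *preterminal* if there is at most one morphism into it from any object. -/
def Preterminal {C : Type u} [Category.{v} C] (c : C) : Prop :=
  ∀ ⦃b : C⦄ (u v : b ⟶ c), u = v

/-- The category of elements `C/X` of a presheaf `X`: objects are pairs `(x, D)`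
with `x ∈ X(D)`. -/
structure Elem {C : Type u} [Category.{v} C] (X : Cᵒᵖ ⥤ Type w) : Type max u w where
  base : C
  elt : X.obj (op base)

/-- Morphisms `(x, D) → (y, E)` in `C/X` are morphisms `f : D → E` of `C` with
`X(f)(y) = x`. -/
instance {C : Type u} [Category.{v} C] (X : Cᵒᵖ ⥤ Type w) : Category (Elem X) where
  Hom a b := {f : a.base ⟶ b.base // X.map f.op b.elt = a.elt}
  id a := ⟨𝟙 a.base, by simp⟩
  comp {a b c} f g := ⟨f.1 ≫ g.1, by
    rw [op_comp, FunctorToTypes.map_comp_apply, g.2, f.2]⟩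
  id_comp f := Subtype.ext (Category.id_comp f.1)
  comp_id f := Subtype.ext (Category.comp_id f.1)
  assoc f g h := Subtype.ext (Category.assoc f.1 g.1 h.1)

/-- A presheaf is *strongly regular* if for every monomorphism of `C/X`
with minimal codomain, the domain is also minimal. -/
def StronglyRegular {C : Type u} [Category.{v} C] (X : Cᵒᵖ ⥤ Type w) : Prop :=
  ∀ ⦃a b : Elem X⦄ (m : a ⟶ b), Mono m → Minimal b → Minimal a

/-- A presheaf is *non-singular* if every minimal object of `C/X` is preterminal. -/
def NonSingular {C : Type u} [Category.{v} C] (X : Cᵒᵖ ⥤ Type w) : Prop :=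
  ∀ a : Elem X, Minimal a → Preterminal a

/-- Every morphism factors as a split epimorphism followed by a monomorphism. -/
def SplitEpiMonoFact (C : Type u) [Category.{v} C] : Prop :=
  ∀ ⦃a b : C⦄ (f : a ⟶ b), ∃ (c : C) (e : a ⟶ c) (m : c ⟶ b),
    IsSplitEpi e ∧ Mono m ∧ e ≫ m = f

/-- Every morphism factors as a strong epimorphism followed by a monomorphism. -/
def StrongEpiMonoFact (C : Type u) [Category.{v} C] : Prop :=
  ∀ ⦃a b : C⦄ (f : a ⟶ b), ∃ (c : C) (e : a ⟶ c) (m : c ⟶ b),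
    StrongEpi e ∧ Mono m ∧ e ≫ m = f

/-- The ascending chain condition: every `ℕ`-indexed chain of monomorphisms lying
over a fixed object via compatible monomorphisms contains an isomorphism. -/
def AscendingChainCondition (C : Type u) [Category.{v} C] : Prop :=
  ∀ (obj : ℕ → C) (c : C) (m : ∀ k : ℕ, obj k ⟶ obj (k + 1)) (i : ∀ k : ℕ, obj k ⟶ c),
    (∀ k, Mono (m k)) → (∀ k, Mono (i k)) → (∀ k, m k ≫ i (k + 1) = i k) →
    ∃ t : ℕ, IsIso (m t)

/-- A category is *well-founded* if every `ℕ`-indexed chain of strong epimorphisms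
is eventually constant. -/
def WellFoundedCat (C : Type u) [Category.{v} C] : Prop :=
  ∀ (obj : ℕ → C) (e : ∀ k : ℕ, obj k ⟶ obj (k + 1)),
    (∀ k, StrongEpi (e k)) → ∃ k : ℕ, ∀ m : ℕ, k ≤ m → IsIso (e m)

/-- `𝔥 c ≤ n`: in every sequence of `n+1` composable monomorphisms ending at `c`,
at least one is an isomorphism. -/
def HeightLE {C : Type u} [Category.{v} C] (c : C) (n : ℕ) : Prop :=
  ∀ (obj : Fin (n + 2) → C) (f : ∀ i : Fin (n + 1), obj i.succ ⟶ obj i.castSucc),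
    (∀ i, Mono (f i)) → obj 0 = c → ∃ i, IsIso (f i)

/-- Every sequence of `n+1` composable morphisms in `C` contains an isomorphism. -/
def ChainsContainIso (C : Type u) [Category.{v} C] (n : ℕ) : Prop :=
  ∀ (obj : Fin (n + 2) → C) (f : ∀ i : Fin (n + 1), obj i.succ ⟶ obj i.castSucc),
    ∃ i, IsIso (f i)

/-- The full subcategory of `C/X` determined by the minimal objects. -/
abbrev MinimalElems {C : Type u} [Category.{v} C] (X : Cᵒᵖ ⥤ Type w) :=
  ObjectProperty.FullSubcategory (fun a : Elem X => Minimal a)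

/-- A morphism factors through an object of height below `n`. -/
def FactorsThroughHeightLE {C : Type u} [Category.{v} C] {a b : C} (f : a ⟶ b) (n : ℕ) : Prop :=
  ∃ (c : C) (v : a ⟶ c) (u : c ⟶ b), HeightLE c n ∧ v ≫ u = f

/-- `dim X ≤ n`: every element of `X` is the restriction of an element along a morphism
factoring through an object of height below `n` (i.e. `X` is `n`-skeletal). -/
def DimLE {C : Type u} [Category.{v} C] (X : Cᵒᵖ ⥤ Type w) (n : ℕ) : Prop :=
  ∀ (D : C) (x : X.obj (op D)), ∃ (E : C) (f : D ⟶ E) (y : X.obj (op E)),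
    FactorsThroughHeightLE f n ∧ X.map f.op y = x

/-- A two-sided ideal of morphisms of a category. -/
def IsIdeal {C : Type u} [Category.{v} C] (I : MorphismProperty C) : Prop :=
  ∀ ⦃a b c d : C⦄ (h : a ⟶ b) (f : b ⟶ c) (g : c ⟶ d), I f → I (h ≫ f ≫ g)

/-- An idempotent ideal: every member factors as a composite of two members. -/
def IsIdempotentIdeal {C : Type u} [Category.{v} C] (I : MorphismProperty C) : Prop :=
  IsIdeal I ∧ ∀ ⦃a b : C⦄ (f : a ⟶ b), I f →
    ∃ (c : C) (h : a ⟶ c) (g : c ⟶ b), I h ∧ I g ∧ h ≫ g = f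

/-- The implication sieve `V ⇒ W`. -/
def sieveImp {C : Type u} [Category.{v} C] {D : C} (V W : Sieve D) : Sieve D where
  arrows F h := ∀ ⦃G : C⦄ (g : G ⟶ F), V.arrows (g ≫ h) → W.arrows (g ≫ h)
  downward_closed := by
    intro F F' h hh g G' g' hv
    have := hh (g' ≫ g) (by simpa using hv)
    simpa using this

/-- `W` is a subpresheaf of `X` given as a family of subsets closed under the action. -/
def IsSubpresheaf {C : Type u} [Category.{v} C] (X : Cᵒᵖ ⥤ Type w)
    (W : ∀ D : Cᵒᵖ, Set (X.obj D)) : Prop :=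
  ∀ ⦃D E : Cᵒᵖ⦄ (f : D ⟶ E) ⦃x : X.obj D⦄, x ∈ W D → X.map f x ∈ W E

/-- The implication subpresheaf `(V ⇒ W)(D)`. -/
def impSet {C : Type u} [Category.{v} C] (X : Cᵒᵖ ⥤ Type w)
    (V W : ∀ D : Cᵒᵖ, Set (X.obj D)) (D : Cᵒᵖ) : Set (X.obj D) :=
  {x | ∀ ⦃E : Cᵒᵖ⦄ (f : D ⟶ E), X.map f x ∈ V E → X.map f x ∈ W E}

/-- `Ξ_k`: the image subpresheaf of the map `C(-, K) → X` corresponding to `k`. -/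
def xiSet {C : Type u} [Category.{v} C] (X : Cᵒᵖ ⥤ Type w) {K : C} (k : X.obj (op K))
    (J : Cᵒᵖ) : Set (X.obj J) :=
  {j | ∃ g : op K ⟶ J, X.map g k = j}

/-- A mono in the category of elements has mono underlying morphism. -/
lemma mono_base_of_mono {C : Type u} [Category.{v} C] {X : Cᵒᵖ ⥤ Type w} {a b : Elem X}
    (φ : a ⟶ b) (hφ : Mono φ) : Mono φ.1 := by
  constructor
  intro B g h hgh
  have key : X.map h.op a.elt = X.map g.op a.elt := by
    conv_lhs => rw [← φ.2]
    conv_rhs => rw [← φ.2]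
    rw [← FunctorToTypes.map_comp_apply, ← FunctorToTypes.map_comp_apply,
      ← op_comp, ← op_comp, hgh]
  let G : (⟨B, X.map g.op a.elt⟩ : Elem X) ⟶ a := ⟨g, rfl⟩
  let H : (⟨B, X.map g.op a.elt⟩ : Elem X) ⟶ a := ⟨h, key⟩
  have hGH : G ≫ φ = H ≫ φ := Subtype.ext hgh
  have := hφ.right_cancellation G H hGH
  exact congrArg Subtype.val this

/-- Height below `n` is inherited along monomorphisms. -/
lemma heightLE_of_mono {C : Type u} [Category.{v} C] {n : ℕ} {a b : C} (m : a ⟶ b)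
    (hm : Mono m) (hb : HeightLE b n) : HeightLE a n := by
  intro obj f hmono h0
  haveI := hm
  have ene : ∀ i : Fin (n + 2), i ≠ 0 → (if i = 0 then b else obj i) = obj i :=
    fun i hi => if_neg hi
  have e0 : (if (0 : Fin (n + 2)) = 0 then b else obj 0) = b := if_pos rfl
  let obj' : Fin (n + 2) → C := fun i => if i = 0 then b else obj i
  let f' : ∀ i : Fin (n + 1), obj' i.succ ⟶ obj' i.castSucc := fun i =>
    if hi : i.castSucc = 0 then
      eqToHom (ene i.succ (Fin.succ_ne_zero i)) ≫ f i ≫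
        eqToHom (show obj i.castSucc = a by rw [hi, h0]) ≫ m ≫
        eqToHom (show b = obj' i.castSucc by rw [show obj' i.castSucc = b from by
          simp only [obj', hi, if_pos rfl]])
    else
      eqToHom (ene i.succ (Fin.succ_ne_zero i)) ≫ f i ≫ eqToHom (ene i.castSucc hi).symm
  have hmono' : ∀ i, Mono (f' i) := by
    intro i
    haveI := hmono i
    by_cases hi : i.castSucc = 0 <;> simp only [f', hi, dif_pos, dif_neg,
      not_false_iff] <;> infer_instance
  obtain ⟨i, hiso⟩ := hb obj' f' hmono' e0
  by_cases hi : i.castSucc = 0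
  · refine ⟨i, ?_⟩
    simp only [f', hi, dif_pos] at hiso
    -- hiso : IsIso (eqToHom _ ≫ f i ≫ eqToHom _ ≫ m ≫ eqToHom _)
    haveI := hiso
    set g := f i ≫ eqToHom (show obj i.castSucc = a by rw [hi, h0]) ≫ m with hg
    have hgiso : IsIso g := by
      have : g = eqToHom (ene i.succ (Fin.succ_ne_zero i)).symm ≫
          (eqToHom (ene i.succ (Fin.succ_ne_zero i)) ≫ f i ≫
            eqToHom (show obj i.castSucc = a by rw [hi, h0]) ≫ m ≫
            eqToHom (show b = obj' i.castSucc by rw [show obj' i.castSucc = b from by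
              simp only [obj', hi, if_pos rfl]])) ≫
          eqToHom (show obj' i.castSucc = b from by
            simp only [obj', hi, if_pos rfl]) := by
        simp only [hg, Category.assoc, eqToHom_trans, eqToHom_trans_assoc, eqToHom_refl,
          Category.id_comp, Category.comp_id]
      rw [this]; infer_instance
    haveI := hgiso
    -- m is iso since it is mono and g = u ≫ m is iso
    set u := f i ≫ eqToHom (show obj i.castSucc = a by rw [hi, h0]) with hu
    have hgu : g = u ≫ m := by simp [hg, hu]
    have hmiso : IsIso m := by
      have h1 : (inv g ≫ u) ≫ m = 𝟙 b := by
        rw [Category.assoc, ← hgu, IsIso.inv_hom_id]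
      refine ⟨inv g ≫ u, ?_, h1⟩
      have h2 : (m ≫ inv g ≫ u) ≫ m = 𝟙 a ≫ m := by
        rw [Category.assoc, h1, Category.comp_id, Category.id_comp]
      exact (cancel_mono m).mp h2
    haveI := hmiso
    have : f i = g ≫ inv m ≫ eqToHom (show a = obj i.castSucc by rw [hi, h0]) := by
      simp [hgu, hu]
    rw [this]; infer_instance
  · refine ⟨i, ?_⟩
    simp only [f', hi, dif_neg, not_false_iff] at hiso
    haveI := hiso
    have : f i = eqToHom (ene i.succ (Fin.succ_ne_zero i)).symm ≫
        (eqToHom (ene i.succ (Fin.succ_ne_zero i)) ≫ f i ≫ eqToHom (ene i.castSucc hi).symm) ≫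
        eqToHom (ene i.castSucc hi) := by
          simp only [Category.assoc, eqToHom_trans, eqToHom_trans_assoc, eqToHom_refl,
            Category.id_comp, Category.comp_id]
    rw [this]; infer_instance

theorem dim_le_implies_ibd {C : Type u} [Category.{v} C]
    (hfact : StrongEpiMonoFact C) (n : ℕ) (X : Cᵒᵖ ⥤ Type w) (hdim : DimLE X n) :
    (∀ a : Elem X, Minimal a → HeightLE a.base n) ∧
      ChainsContainIso (MinimalElems X) n := by
  have part1 : ∀ a : Elem X, Minimal a → HeightLE a.base n := by
    intro a ha
    obtain ⟨E, f, y, ⟨c, v, u, hc, hvu⟩, hxy⟩ := hdim a.base a.elt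
    obtain ⟨c', e, m, he, hm, hem⟩ := hfact v
    have hz : X.map e.op (X.map (m ≫ u).op y) = a.elt := by
      rw [← FunctorToTypes.map_comp_apply, ← op_comp]
      have hcomp : e ≫ m ≫ u = f := by rw [← Category.assoc, hem, hvu]
      rw [hcomp, hxy]
    let ε : a ⟶ (⟨c', X.map (m ≫ u).op y⟩ : Elem X) := ⟨e, hz⟩
    have hmε : Mono ε := ha ε
    have hmonoe : Mono e := mono_base_of_mono ε hmε
    haveI := he; haveI := hmonoe
    haveI : IsIso e := isIso_of_mono_of_strongEpi e
    haveI := hm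
    have : Mono (e ≫ m) := mono_comp e m
    exact heightLE_of_mono (e ≫ m) this hc
  refine ⟨part1, ?_⟩
  intro obj f
  have hmono : ∀ i : Fin (n + 1), Mono ((f i).hom.1 : (obj i.succ).obj.base ⟶ _) := by
    intro i
    exact mono_base_of_mono (f i).hom ((obj i.succ).property (f i).hom)
  obtain ⟨i, hiso⟩ := part1 (obj 0).obj (obj 0).property
    (fun i => (obj i).obj.base) (fun i => (f i).hom.1) hmono rfl
  refine ⟨i, ?_⟩
  haveI := hiso
  have hinv : X.map (inv (f i).hom.1).op (obj i.succ).obj.elt = (obj i.castSucc).obj.elt := by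
    calc X.map (inv (f i).hom.1).op (obj i.succ).obj.elt
        = X.map (inv (f i).hom.1).op (X.map (f i).hom.1.op (obj i.castSucc).obj.elt) := by
          rw [(f i).hom.2]
      _ = (obj i.castSucc).obj.elt := by
          rw [← FunctorToTypes.map_comp_apply, ← op_comp, IsIso.inv_hom_id, op_id,
            FunctorToTypes.map_id_apply]
  refine ⟨ObjectProperty.homMk ⟨inv (f i).hom.1, hinv⟩, InducedCategory.hom_ext (Subtype.ext ?_),
    InducedCategory.hom_ext (Subtype.ext ?_)⟩
  · exact IsIso.hom_inv_id (f i).hom.1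
  · exact IsIso.inv_hom_id (f i).hom.1

end PaperEtendue
end

section
/- Let C be a small well-founded category in which every morphism factors as a strong epimorphism followed by a monomorphism, and let X be a strongly regular presheaf on C. Then for every n ∈ ℕ: dim X ≤ n if and only if every sequence of n+1 composable morphisms in the full subcategory of the category of elements C/X determined by the minimal objects contains an isomorphism (equivalently, the bounded-depth formula IBD_n holds in the étendue D X). -/
open CategoryTheory Opposite

universe w v u

namespace PaperEtendue

section AuxLemmas

variable {C : Type u} [Category.{v} C] {X : Cᵒᵖ ⥤ Type w}

lemma mono_base {a b : Elem X} (f : a ⟶ b) (hf : Mono f) : Mono f.1 := by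
  constructor
  intro G g h hgh
  have hha : X.map h.op a.elt = X.map g.op a.elt := by
    calc X.map h.op a.elt = X.map h.op (X.map f.1.op b.elt) := by rw [f.2]
      _ = X.map (h ≫ f.1).op b.elt := by rw [op_comp, FunctorToTypes.map_comp_apply]
      _ = X.map (g ≫ f.1).op b.elt := by rw [hgh]
      _ = X.map g.op (X.map f.1.op b.elt) := by rw [op_comp, FunctorToTypes.map_comp_apply]
      _ = X.map g.op a.elt := by rw [f.2]
  let G' : Elem X := ⟨G, X.map g.op a.elt⟩
  have key : (⟨g, rfl⟩ : G' ⟶ a) = ⟨h, hha⟩ :=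
    hf.right_cancellation (⟨g, rfl⟩ : G' ⟶ a) ⟨h, hha⟩ (Subtype.ext hgh)
  exact congrArg Subtype.val key

lemma elem_mono_of_base {a b : Elem X} (f : a ⟶ b) (hf : Mono f.1) : Mono f := by
  constructor
  intro G g h hgh
  exact Subtype.ext (hf.right_cancellation g.1 h.1 (congrArg Subtype.val hgh))

lemma elem_isIso_of_base {a b : Elem X} (f : a ⟶ b) (hf : IsIso f.1) : IsIso f := by
  obtain ⟨g, hg1, hg2⟩ := hf.out
  refine ⟨⟨g, ?_⟩, Subtype.ext hg1, Subtype.ext hg2⟩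
  calc X.map g.op a.elt = X.map g.op (X.map f.1.op b.elt) := by rw [f.2]
    _ = X.map (g ≫ f.1).op b.elt := by rw [op_comp, FunctorToTypes.map_comp_apply]
    _ = b.elt := by rw [hg2, op_id, FunctorToTypes.map_id_apply]

lemma isIso_left_of_mono {a b c : C} (g : a ⟶ b) (w : b ⟶ c) (hw : Mono w)
    (h : IsIso (g ≫ w)) : IsIso g := by
  haveI := hw; haveI := h
  haveI : IsSplitEpi w := ⟨⟨⟨inv (g ≫ w) ≫ g, by simp⟩⟩⟩
  haveI : IsIso w := isIso_of_mono_of_isSplitEpi w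
  exact IsIso.of_isIso_comp_right g w

/-- If a morphism of `C/X` has a non-minimal domain, there is a non-invertible
strong epimorphism (on bases) out of it. -/
lemma step_of_not_minimal (hfact : StrongEpiMonoFact C) {b : Elem X} (hb : ¬ Minimal b) :
    ∃ (q : Elem X) (g : b ⟶ q), StrongEpi g.1 ∧ ¬ IsIso g.1 := by
  simp only [Minimal, not_forall] at hb
  obtain ⟨d, f, hf⟩ := hb
  have hf1 : ¬ Mono f.1 := fun h => hf (elem_mono_of_base f h)
  obtain ⟨c, e, m, he, hm, hem⟩ := hfact f.1
  refine ⟨⟨c, X.map m.op d.elt⟩, ⟨e, ?_⟩, he, ?_⟩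
  · rw [← FunctorToTypes.map_comp_apply, ← op_comp, hem, f.2]
  · intro hi
    haveI := hi; haveI := hm
    exact hf1 (by rw [← hem]; infer_instance)

/-- In a well-founded category with strong epi-mono factorizations, every object of
`C/X` admits a morphism to a minimal object. -/
lemma exists_hom_to_minimal (hwf : WellFoundedCat C) (hfact : StrongEpiMonoFact C)
    (a : Elem X) : ∃ b : Elem X, Minimal b ∧ Nonempty (a ⟶ b) := by
  by_contra hcon
  push_neg at hcon
  have step : ∀ p : Σ' b : Elem X, (a ⟶ b),
      ∃ q : Σ' b : Elem X, (a ⟶ b), ∃ g : p.1 ⟶ q.1, StrongEpi g.1 ∧ ¬ IsIso g.1 := by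
    intro p
    have hmin : ¬ Minimal p.1 := fun h => (hcon p.1 h).false p.2
    obtain ⟨q, g, h1, h2⟩ := step_of_not_minimal hfact hmin
    exact ⟨⟨q, p.2 ≫ g⟩, g, h1, h2⟩
  choose next g hse hni using step
  let seq : ℕ → Σ' b : Elem X, (a ⟶ b) := fun k => Nat.rec ⟨a, 𝟙 a⟩ (fun _ p => next p) k
  obtain ⟨k, hk⟩ := hwf (fun k => (seq k).1.base) (fun k => (g (seq k)).1) (fun k => hse (seq k))
  exact hni (seq k) (hk k le_rfl)

/-- Shifting a chain of monomorphisms along a monomorphism into an object of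
bounded height. -/
lemma heightLE_shift {c D : C} (v : D ⟶ c) (hv : Mono v) {n : ℕ} (hc : HeightLE c n)
    (obj : Fin (n + 2) → C) (f : ∀ i : Fin (n + 1), obj i.succ ⟶ obj i.castSucc)
    (hm : ∀ i, Mono (f i)) (h0 : obj 0 = D) : ∃ i, IsIso (f i) := by
  classical
  let obj' : Fin (n + 2) → C := fun j => if j = 0 then c else obj j
  have hA : ∀ i : Fin (n + 1), obj' i.succ = obj i.succ := fun i =>
    if_neg (Fin.succ_ne_zero i)
  have hB : ∀ i : Fin (n + 1), i ≠ 0 → obj' i.castSucc = obj i.castSucc := by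
    intro i hi
    exact if_neg (by simpa using hi)
  have hB0 : ∀ i : Fin (n + 1), i = 0 → obj' i.castSucc = c := by
    intro i hi
    subst hi
    simp [obj']
  have hD0 : ∀ i : Fin (n + 1), i = 0 → obj i.castSucc = D := by
    intro i hi
    subst hi
    rw [Fin.castSucc_zero]
    exact h0
  let f' : ∀ i : Fin (n + 1), obj' i.succ ⟶ obj' i.castSucc := fun i =>
    eqToHom (hA i) ≫ f i ≫
      (if h : i = 0 then eqToHom (hD0 i h) ≫ v ≫ eqToHom (hB0 i h).symm
       else eqToHom (hB i h).symm)
  have hm' : ∀ i, Mono (f' i) := by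
    intro i
    haveI := hm i; haveI := hv
    by_cases h : i = 0
    · show Mono (eqToHom (hA i) ≫ f i ≫ _)
      rw [dif_pos h]
      infer_instance
    · show Mono (eqToHom (hA i) ≫ f i ≫ _)
      rw [dif_neg h]
      infer_instance
  obtain ⟨i, hi⟩ := hc obj' f' hm' (if_pos rfl)
  refine ⟨i, ?_⟩
  by_cases h : i = 0
  · haveI := hv
    have hfi : f' i = eqToHom (hA i) ≫ f i ≫
        (eqToHom (hD0 i h) ≫ v ≫ eqToHom (hB0 i h).symm) := by
      show (eqToHom (hA i) ≫ f i ≫ _) = _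
      rw [dif_pos h]
    rw [hfi] at hi
    haveI := hi
    have hcomp : IsIso (f i ≫ eqToHom (hD0 i h) ≫ v ≫ eqToHom (hB0 i h).symm) :=
      IsIso.of_isIso_comp_left (eqToHom (hA i)) _
    exact isIso_left_of_mono (f i) (eqToHom (hD0 i h) ≫ v ≫ eqToHom (hB0 i h).symm)
      inferInstance hcomp
  · have hfi : f' i = eqToHom (hA i) ≫ f i ≫ eqToHom (hB i h).symm := by
      show (eqToHom (hA i) ≫ f i ≫ _) = _
      rw [dif_neg h]
    rw [hfi] at hi
    haveI := hi
    haveI : IsIso (f i ≫ eqToHom (hB i h).symm) :=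
      IsIso.of_isIso_comp_left (eqToHom (hA i)) _
    exact IsIso.of_isIso_comp_right (f i) (eqToHom (hB i h).symm)

/-- The base of a minimal object of `C/X` has height below `n` when every chain of
`n+1` composable morphisms between minimal objects contains an isomorphism. -/
lemma heightLE_of_minimal {n : ℕ} (hreg : StronglyRegular X)
    (hch : ChainsContainIso (MinimalElems X) n) (b : Elem X) (hb : Minimal b) :
    HeightLE b.base n := by
  intro obj f hmono h0
  let x0 : X.obj (op (obj 0)) := X.map (eqToHom h0).op b.elt
  let cmap : ∀ j : Fin (n + 2), (obj j ⟶ obj 0) := fun j =>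
    Fin.induction (𝟙 (obj 0)) (fun i ih => f i ≫ ih) j
  have hc0 : cmap 0 = 𝟙 (obj 0) := Fin.induction_zero _ _
  have hcs : ∀ i : Fin (n + 1), cmap i.succ = f i ≫ cmap i.castSucc := fun i =>
    Fin.induction_succ _ _ i
  have hcmono : ∀ j, Mono (cmap j) := by
    intro j
    induction j using Fin.induction with
    | zero => rw [hc0]; infer_instance
    | succ i ih =>
        rw [hcs i]
        haveI := hmono i; haveI := ih
        infer_instance
  let a : ∀ j : Fin (n + 2), Elem X := fun j => ⟨obj j, X.map (cmap j).op x0⟩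
  have ha0 : (a 0).elt = x0 := by
    show X.map (cmap 0).op x0 = x0
    rw [hc0, op_id, FunctorToTypes.map_id_apply]
  have hmin0 : Minimal (a 0) := by
    refine hreg (a := a 0) (b := b) ⟨eqToHom h0, ?_⟩ ?_ hb
    · exact ha0.symm
    · exact elem_mono_of_base _ inferInstance
  have hminj : ∀ j, Minimal (a j) := by
    intro j
    refine hreg (a := a j) (b := a 0) ⟨cmap j, ?_⟩ ?_ hmin0
    · show X.map (cmap j).op (a 0).elt = X.map (cmap j).op x0
      rw [ha0]
    · exact elem_mono_of_base _ (hcmono j)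
  let A : Fin (n + 2) → MinimalElems X := fun j => ⟨a j, hminj j⟩
  have hF : ∀ i : Fin (n + 1),
      X.map (f i).op ((a i.castSucc).elt) = (a i.succ).elt := by
    intro i
    show X.map (f i).op (X.map (cmap i.castSucc).op x0) = X.map (cmap i.succ).op x0
    rw [hcs i, op_comp, FunctorToTypes.map_comp_apply]
  let F : ∀ i : Fin (n + 1), A i.succ ⟶ A i.castSucc := fun i =>
    ObjectProperty.homMk (⟨f i, hF i⟩ : a i.succ ⟶ a i.castSucc)
  obtain ⟨i, hi⟩ := hch A F
  obtain ⟨G, h1, h2⟩ := hi.out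
  exact ⟨i, ⟨G.hom.1, congrArg (fun k => k.hom.1) h1, congrArg (fun k => k.hom.1) h2⟩⟩

end AuxLemmas

theorem dim_le_iff_ibd {C : Type u} [Category.{v} C]
    (hwf : WellFoundedCat C) (hfact : StrongEpiMonoFact C)
    (X : Cᵒᵖ ⥤ Type w) (hreg : StronglyRegular X) (n : ℕ) :
    DimLE X n ↔ ChainsContainIso (MinimalElems X) n := by
  constructor
  · -- dim X ≤ n implies chains of minimal elements contain isomorphisms
    intro hdim A F
    have hmonoE : ∀ i : Fin (n + 1),
        @Mono (Elem X) _ ((A i.succ).obj) ((A i.castSucc).obj) (F i).hom :=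
      fun i => (A i.succ).property (F i).hom
    have hmono : ∀ i : Fin (n + 1), Mono (F i).hom.1 := fun i => mono_base _ (hmonoE i)
    obtain ⟨E, f, y, ⟨c, v, u, hcht, hvu⟩, hxy⟩ :=
      hdim ((A 0).obj.base) ((A 0).obj.elt)
    have hz : X.map v.op (X.map u.op y) = (A 0).obj.elt := by
      rw [← FunctorToTypes.map_comp_apply, ← op_comp, hvu]
      exact hxy
    have hvelem : Mono (⟨v, hz⟩ : (A 0).obj ⟶ (⟨c, X.map u.op y⟩ : Elem X)) :=
      (A 0).property _
    have hvmono : Mono v := mono_base _ hvelem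
    obtain ⟨i, hi⟩ := heightLE_shift v hvmono hcht (fun j => (A j).obj.base)
      (fun i => (F i).hom.1) hmono rfl
    refine ⟨i, ?_⟩
    obtain ⟨G, h1, h2⟩ := (elem_isIso_of_base (F i).hom hi).out
    exact (ObjectProperty.isIso_hom_iff _).mp ⟨G, h1, h2⟩
  · -- chains of minimal elements contain isomorphisms implies dim X ≤ n
    intro hch D x
    obtain ⟨b, hbmin, ⟨e⟩⟩ := exists_hom_to_minimal hwf hfact (⟨D, x⟩ : Elem X)
    exact ⟨b.base, e.1, b.elt,
      ⟨b.base, e.1, 𝟙 b.base, heightLE_of_minimal hreg hch b hbmin, Category.comp_id _⟩,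
      e.2⟩


end PaperEtendue
end
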